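/- Let a, b₁, b₂, γ be positive reals, c ≠ 0 a real parameter, and ω > 0 a real number with h(ω²) = 0. Then for every natural number j, both iω and −iω are roots of the characteristic function Δ_{c,τ} with delay τ = τ^{(j)}(ω). -/

import Mathlib

noncomputable section

open Real

/-- A = b₁+b₂+2a -/
def Ac (a b1 b2 : ℝ) : ℝ := b1 + b2 + 2*a
/-- B = 2a(b₁+b₂)+a²+b₁b₂+2γ -/
def Bc (a b1 b2 γ : ℝ) : ℝ := 2*a*(b1+b2) + a^2 + b1*b2 + 2*γ
/-- C = (a+b₁)(ab₂+γ)+(a+b₂)(ab₁+γ) -/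
def Cc (a b1 b2 γ : ℝ) : ℝ := (a+b1)*(a*b2+γ) + (a+b2)*(a*b1+γ)
/-- D = (ab₁+γ)(ab₂+γ) -/
def Dc (a b1 b2 γ : ℝ) : ℝ := (a*b1+γ)*(a*b2+γ)
/-- P = A² − 2B -/
def Pc (a b1 b2 γ : ℝ) : ℝ := (Ac a b1 b2)^2 - 2*(Bc a b1 b2 γ)
/-- Q = B² + 2D − 2AC − c⁴ -/
def Qc (a b1 b2 γ c : ℝ) : ℝ :=
  (Bc a b1 b2 γ)^2 + 2*(Dc a b1 b2 γ) - 2*(Ac a b1 b2)*(Cc a b1 b2 γ) - c^4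
/-- R = C² − 2BD − c⁴(b₁²+b₂²) -/
def Rc (a b1 b2 γ c : ℝ) : ℝ :=
  (Cc a b1 b2 γ)^2 - 2*(Bc a b1 b2 γ)*(Dc a b1 b2 γ) - c^4*(b1^2+b2^2)
/-- S = D² − c⁴b₁²b₂² -/
def Sc (a b1 b2 γ c : ℝ) : ℝ := (Dc a b1 b2 γ)^2 - c^4*b1^2*b2^2
/-- h(z) = z⁴ + Pz³ + Qz² + Rz + S -/
def hq (a b1 b2 γ c z : ℝ) : ℝ :=
  z^4 + Pc a b1 b2 γ*z^3 + Qc a b1 b2 γ c*z^2 + Rc a b1 b2 γ c*z + Sc a b1 b2 γ c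
/-- h′(z) = 4z³ + 3Pz² + 2Qz + R -/
def hq' (a b1 b2 γ c z : ℝ) : ℝ :=
  4*z^3 + 3*(Pc a b1 b2 γ)*z^2 + 2*(Qc a b1 b2 γ c)*z + Rc a b1 b2 γ c
/-- The characteristic function Δ_{c,τ}(λ) of the linearization at the trivial equilibrium. -/
def charFun (a b1 b2 γ c τ : ℝ) (lam : ℂ) : ℂ :=
  (lam^2 + (a+b1 : ℝ)*lam + (a*b1+γ : ℝ)) * (lam^2 + (a+b2 : ℝ)*lam + (a*b2+γ : ℝ))
    - (c^2 : ℝ) * (lam + (b1 : ℝ)) * (lam + (b2 : ℝ)) * Complex.exp ((-2) * lam * (τ : ℝ))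
/-- N(ω) = c²[(b₁+b₂)²ω² + (ω²−b₁b₂)²] -/
def Nfun (b1 b2 c ω : ℝ) : ℝ := c^2*((b1+b2)^2*ω^2 + (ω^2 - b1*b2)^2)
/-- a*(ω) -/
def aStar (a b1 b2 γ c ω : ℝ) : ℝ :=
  ((ω^4 - Bc a b1 b2 γ*ω^2 + Dc a b1 b2 γ)*(b1+b2)*ω
    + (Ac a b1 b2*ω^3 - Cc a b1 b2 γ*ω)*(b1*b2 - ω^2)) / Nfun b1 b2 c ω
/-- b*(ω) -/
def bStar (a b1 b2 γ c ω : ℝ) : ℝ :=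
  ((ω^4 - Bc a b1 b2 γ*ω^2 + Dc a b1 b2 γ)*(b1*b2 - ω^2)
    + (-(Ac a b1 b2)*ω^3 + Cc a b1 b2 γ*ω)*(b1+b2)*ω) / Nfun b1 b2 c ω
/-- the critical delays τ^{(j)}(ω) -/
def tauJ (a b1 b2 γ c : ℝ) (j : ℕ) (ω : ℝ) : ℝ :=
  if 0 ≤ aStar a b1 b2 γ c ω then
    (1/(2*ω)) * (Real.arccos (bStar a b1 b2 γ c ω) + 2*(j:ℝ)*Real.pi)
  else
    (1/(2*ω)) * (2*Real.pi - Real.arccos (bStar a b1 b2 γ c ω) + 2*(j:ℝ)*Real.pi)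


set_option maxRecDepth 8000 in
set_option maxHeartbeats 2000000 in
private lemma stmt7_sum (a b1 b2 γ c : ℝ) (hb1 : 0 < b1) (hb2 : 0 < b2)
    (hc : c ≠ 0) (ω : ℝ) (hω : 0 < ω) (hroot : hq a b1 b2 γ c (ω^2) = 0) :
    (aStar a b1 b2 γ c ω)^2 + (bStar a b1 b2 γ c ω)^2 = 1 := by
  have hNf : (0:ℝ) < Nfun b1 b2 c ω := by unfold Nfun; positivity
  have hNf' : Nfun b1 b2 c ω ≠ 0 := ne_of_gt hNf
  unfold aStar bStar
  rw [div_pow, div_pow, ← add_div, div_eq_one_iff_eq (by positivity)]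
  unfold hq Pc Qc Rc Sc Ac Bc Cc Dc at hroot
  unfold Ac Bc Cc Dc Nfun
  linear_combination ((b1+b2)^2*ω^2 + (ω^2 - b1*b2)^2) * hroot

private lemma stmt7_cs (a b1 b2 γ c : ℝ) (ω : ℝ) (hω : 0 < ω) (j : ℕ)
    (hsum : (aStar a b1 b2 γ c ω)^2 + (bStar a b1 b2 γ c ω)^2 = 1) :
    Real.cos (2*ω*(tauJ a b1 b2 γ c j ω)) = bStar a b1 b2 γ c ω ∧
    Real.sin (2*ω*(tauJ a b1 b2 γ c j ω)) = aStar a b1 b2 γ c ω := by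
  set aS := aStar a b1 b2 γ c ω with haSdef
  set bS := bStar a b1 b2 γ c ω with hbSdef
  have hω' : ω ≠ 0 := ne_of_gt hω
  have hbl : -1 ≤ bS := by nlinarith [sq_nonneg aS, sq_nonneg (bS+1)]
  have hbu : bS ≤ 1 := by nlinarith [sq_nonneg aS, sq_nonneg (bS-1)]
  have h1bs : 1 - bS^2 = aS^2 := by linarith
  by_cases haS : 0 ≤ aS
  · have ht : 2*ω*(tauJ a b1 b2 γ c j ω) = Real.arccos bS + (j:ℤ)*(2*Real.pi) := by
      unfold tauJ
      rw [← haSdef, ← hbSdef, if_pos haS]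
      push_cast
      field_simp
    rw [ht, Real.cos_add_int_mul_two_pi, Real.sin_add_int_mul_two_pi,
        Real.cos_arccos hbl hbu, Real.sin_arccos, h1bs, Real.sqrt_sq haS]
    exact ⟨rfl, rfl⟩
  · have ht : 2*ω*(tauJ a b1 b2 γ c j ω)
        = -Real.arccos bS + ((((j:ℤ)+1 : ℤ)):ℝ)*(2*Real.pi) := by
      unfold tauJ
      rw [← haSdef, ← hbSdef, if_neg haS]
      push_cast
      field_simp
      ring
    rw [ht, Real.cos_add_int_mul_two_pi, Real.sin_add_int_mul_two_pi, Real.cos_neg, Real.sin_neg,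
        Real.cos_arccos hbl hbu, Real.sin_arccos, h1bs, Real.sqrt_sq_eq_abs,
        abs_of_neg (not_le.mp haS)]
    exact ⟨rfl, neg_neg aS⟩

private lemma stmt7_reim (a b1 b2 γ c : ℝ) (hb1 : 0 < b1) (hb2 : 0 < b2)
    (hc : c ≠ 0) (ω : ℝ) (hω : 0 < ω) :
    c^2*((b1*b2-ω^2)*(bStar a b1 b2 γ c ω) + (b1+b2)*ω*(aStar a b1 b2 γ c ω))
      = ω^4 - Bc a b1 b2 γ*ω^2 + Dc a b1 b2 γ ∧
    c^2*((b1+b2)*ω*(bStar a b1 b2 γ c ω) - (b1*b2-ω^2)*(aStar a b1 b2 γ c ω))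
      = Cc a b1 b2 γ*ω - Ac a b1 b2*ω^3 := by
  have hNf : (0:ℝ) < Nfun b1 b2 c ω := by unfold Nfun; positivity
  have hNf' : Nfun b1 b2 c ω ≠ 0 := ne_of_gt hNf
  unfold aStar bStar
  constructor
  · field_simp
    unfold Nfun
    ring
  · field_simp
    unfold Nfun
    ring

private lemma stmt7_main (a b1 b2 γ c ω τ : ℝ)
    (hcos : Real.cos (2*ω*τ) = bStar a b1 b2 γ c ω)
    (hsin : Real.sin (2*ω*τ) = aStar a b1 b2 γ c ω)
    (hRe : c^2*((b1*b2-ω^2)*(bStar a b1 b2 γ c ω) + (b1+b2)*ω*(aStar a b1 b2 γ c ω))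
      = ω^4 - Bc a b1 b2 γ*ω^2 + Dc a b1 b2 γ)
    (hIm : c^2*((b1+b2)*ω*(bStar a b1 b2 γ c ω) - (b1*b2-ω^2)*(aStar a b1 b2 γ c ω))
      = Cc a b1 b2 γ*ω - Ac a b1 b2*ω^3) :
    charFun a b1 b2 γ c τ (Complex.I * (ω : ℂ)) = 0 ∧
    charFun a b1 b2 γ c τ (-(Complex.I * (ω : ℂ))) = 0 := by
  set aS := aStar a b1 b2 γ c ω with haSdef
  set bS := bStar a b1 b2 γ c ω with hbSdef
  unfold Bc Dc at hRe
  unfold Ac Cc at hIm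
  have hexp1 : Complex.exp ((-2) * (Complex.I * (ω:ℂ)) * ((τ:ℝ):ℂ))
      = (bS:ℂ) - (aS:ℂ)*Complex.I := by
    have h : ((-2) * (Complex.I * (ω:ℂ)) * ((τ:ℝ):ℂ)) = ((-(2*ω*τ) : ℝ):ℂ) * Complex.I := by
      push_cast; ring
    rw [h, Complex.exp_mul_I, ← Complex.ofReal_cos, ← Complex.ofReal_sin,
        Real.cos_neg, Real.sin_neg, hcos, hsin]
    push_cast; ring
  have hexp2 : Complex.exp ((-2) * (-(Complex.I * (ω:ℂ))) * ((τ:ℝ):ℂ))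
      = (bS:ℂ) + (aS:ℂ)*Complex.I := by
    have h : ((-2) * (-(Complex.I * (ω:ℂ))) * ((τ:ℝ):ℂ)) = (((2*ω*τ) : ℝ):ℂ) * Complex.I := by
      push_cast; ring
    rw [h, Complex.exp_mul_I, ← Complex.ofReal_cos, ← Complex.ofReal_sin, hcos, hsin]
  constructor
  · unfold charFun
    rw [hexp1]
    apply Complex.ext
    · simp only [Complex.add_re, Complex.add_im, Complex.sub_re, Complex.sub_im,
        Complex.mul_re, Complex.mul_im, Complex.ofReal_re, Complex.ofReal_im,
        Complex.I_re, Complex.I_im, Complex.zero_re, Complex.zero_im,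
        Complex.neg_re, Complex.neg_im, pow_two]
      ring_nf
      linear_combination -hRe
    · simp only [Complex.add_re, Complex.add_im, Complex.sub_re, Complex.sub_im,
        Complex.mul_re, Complex.mul_im, Complex.ofReal_re, Complex.ofReal_im,
        Complex.I_re, Complex.I_im, Complex.zero_re, Complex.zero_im,
        Complex.neg_re, Complex.neg_im, pow_two]
      ring_nf
      linear_combination -hIm
  · unfold charFun
    rw [hexp2]
    apply Complex.ext
    · simp only [Complex.add_re, Complex.add_im, Complex.sub_re, Complex.sub_im,
        Complex.mul_re, Complex.mul_im, Complex.ofReal_re, Complex.ofReal_im,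
        Complex.I_re, Complex.I_im, Complex.zero_re, Complex.zero_im,
        Complex.neg_re, Complex.neg_im, pow_two]
      ring_nf
      linear_combination -hRe
    · simp only [Complex.add_re, Complex.add_im, Complex.sub_re, Complex.sub_im,
        Complex.mul_re, Complex.mul_im, Complex.ofReal_re, Complex.ofReal_im,
        Complex.I_re, Complex.I_im, Complex.zero_re, Complex.zero_im,
        Complex.neg_re, Complex.neg_im, pow_two]
      ring_nf
      linear_combination hIm

/-- if h(ω²) = 0 (ω > 0, c ≠ 0), then for every j, ±iω are roots of
Δ_{c,τ} with τ = τ^{(j)}(ω). -/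
theorem stmt7 (a b1 b2 γ c : ℝ)
    (ha : 0 < a) (hb1 : 0 < b1) (hb2 : 0 < b2) (hγ : 0 < γ) (hc : c ≠ 0)
    (ω : ℝ) (hω : 0 < ω) (hroot : hq a b1 b2 γ c (ω^2) = 0) :
    ∀ j : ℕ,
      charFun a b1 b2 γ c (tauJ a b1 b2 γ c j ω) (Complex.I * (ω : ℂ)) = 0 ∧
      charFun a b1 b2 γ c (tauJ a b1 b2 γ c j ω) (-(Complex.I * (ω : ℂ))) = 0 := by
  intro j
  have hsum := stmt7_sum a b1 b2 γ c hb1 hb2 hc ω hω hroot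
  obtain ⟨hcos, hsin⟩ := stmt7_cs a b1 b2 γ c ω hω j hsum
  obtain ⟨hRe, hIm⟩ := stmt7_reim a b1 b2 γ c hb1 hb2 hc ω hω
  exact stmt7_main a b1 b2 γ c ω (tauJ a b1 b2 γ c j ω) hcos hsin hRe hIm
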